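/- B̄A_Lip(ω^ω) implies B̄A_Lip(2^ω): if for all ℵ1-dense A, B ⊆ ℕ → ℕ there is a Lipschitz f : (ℕ → ℕ) → (ℕ → ℕ) injective on A with f '' A = B, then for all ℵ1-dense A, B ⊆ ℕ → Bool there is a sequence of Lipschitz functions fₙ : (ℕ → Bool) → (ℕ → Bool) (n : ℕ) such that B = ⋃ₙ fₙ '' A. -/
import Mathlib


/-- A set `S` in a topological space is `ℵ₁`-dense if its intersection with every nonempty
open set has cardinality `ℵ₁`. -/
def Aleph1Dense {Z : Type*} [TopologicalSpace Z] (S : Set Z) : Prop :=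
  ∀ U : Set Z, IsOpen U → U.Nonempty → Cardinal.mk ↥(S ∩ U) = Cardinal.aleph 1

/-- `f` is Lipschitz: if `x` and `y` agree below `n` then so do `f x` and `f y`. -/
def IsLip {X : ℕ → Type*} (f : (∀ n, X n) → (∀ n, X n)) : Prop :=
  ∀ x y : ∀ n, X n, ∀ n : ℕ, (∀ i < n, x i = y i) → ∀ i < n, f x i = f y i

namespace Stmt10Aux

/-- parity map `ω^ω → 2^ω`. -/
def g (x : ℕ → ℕ) : ℕ → Bool := fun n => decide (x n % 2 = 1)

/-- lift of `S ⊆ 2^ω` to `ω^ω`: preimage under `g` of `S`, eventually `≤ 1`. -/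
def ext (S : Set (ℕ → Bool)) : Set (ℕ → ℕ) :=
  {x | g x ∈ S ∧ ∃ k, ∀ i ≥ k, x i ≤ 1}

lemma g_ofBool (y : ℕ → Bool) : g (fun n => (y n).toNat) = y := by
  funext n; cases h : y n <;> simp [g, h]

lemma g_toNat (x : ℕ → ℕ) (i : ℕ) : (g x i).toNat = x i % 2 := by
  rcases Nat.mod_two_eq_zero_or_one (x i) with h | h <;> simp [g, h]

lemma eq_toNat {x : ℕ → ℕ} {i : ℕ} (h : x i ≤ 1) : x i = (g x i).toNat := by
  rw [g_toNat]; omega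

/-- coordinatewise modification by a list. -/
def md (l : List ℕ) (y : ℕ → Bool) : ℕ → ℕ := fun i => 2 * l.getD i 0 + (y i).toNat

lemma g_md (l : List ℕ) (y : ℕ → Bool) : g (md l y) = y := by
  funext i; cases h : y i <;> simp [g, md, h, Nat.mul_add_mod]

lemma md_mem_ext {S : Set (ℕ → Bool)} {y : ℕ → Bool} (hy : y ∈ S) (l : List ℕ) :
    md l y ∈ ext S := by
  refine ⟨by rw [g_md]; exact hy, l.length, fun i hi => ?_⟩
  simp only [md, List.getD_eq_default _ _ hi]
  cases y i <;> simp

lemma ext_repr {S : Set (ℕ → Bool)} {x : ℕ → ℕ} (hx : x ∈ ext S) {k : ℕ}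
    (hk : ∀ i ≥ k, x i ≤ 1) :
    x = md (List.ofFn (fun i : Fin k => x i / 2)) (g x) := by
  funext i
  by_cases hik : i < k
  · have hget : (List.ofFn (fun i : Fin k => x i / 2)).getD i 0 = x i / 2 := by
      rw [List.getD_eq_getElem _ _ (by simpa using hik)]
      simp
    simp only [md, hget, g_toNat]
    omega
  · have hget : (List.ofFn (fun i : Fin k => x i / 2)).getD i 0 = 0 :=
      List.getD_eq_default _ _ (by simpa using Nat.le_of_not_lt hik)
    have h1 : x i ≤ 1 := hk i (Nat.le_of_not_lt hik)
    simp only [md, hget, Nat.mul_zero, Nat.zero_add]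
    exact eq_toNat h1

/-- every open set around `u` in a product contains a cylinder. -/
lemma exists_cyl {π : ℕ → Type*} [∀ i, TopologicalSpace (π i)]
    {U : Set (∀ i, π i)} (hU : IsOpen U) {u : ∀ i, π i} (hu : u ∈ U) :
    ∃ n, ∀ x : ∀ i, π i, (∀ i < n, x i = u i) → x ∈ U := by
  obtain ⟨I, t, h1, h2⟩ := isOpen_pi_iff.mp hU u hu
  refine ⟨I.sup id + 1, fun x hx => h2 ?_⟩
  intro i hi
  have : i < I.sup id + 1 := Nat.lt_succ_of_le (Finset.le_sup (f := id) hi)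
  rw [hx i this]
  exact (h1 i hi).2

lemma cyl_open (n : ℕ) (c : ℕ → Bool) : IsOpen {y : ℕ → Bool | ∀ i < n, y i = c i} := by
  have : {y : ℕ → Bool | ∀ i < n, y i = c i}
      = Set.pi ↑(Finset.range n) (fun i => {c i}) := by
    ext y
    simp [Set.mem_pi]
  rw [this]
  exact isOpen_set_pi (Finset.range n).finite_toSet (fun i _ => isOpen_discrete _)

lemma mk_ext_le {S : Set (ℕ → Bool)} (hS : Aleph1Dense S) :
    Cardinal.mk ↥(ext S) ≤ Cardinal.aleph 1 := by
  classical
  have hSmk : Cardinal.mk ↥S = Cardinal.aleph 1 := by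
    have := hS Set.univ isOpen_univ ⟨fun _ => true, trivial⟩
    rwa [Set.inter_univ] at this
  -- inject ext S into S × List ℕ
  have hinj : ∃ Φ : ↥(ext S) → ↥S × List ℕ, Function.Injective Φ := by
    refine ⟨fun x =>
      (⟨g x.1, x.2.1⟩,
        List.ofFn (fun i : Fin (Classical.choose x.2.2) => x.1 i / 2)), ?_⟩
    intro x y hxy
    have h1 : g x.1 = g y.1 := congrArg (fun p => (p.1 : ℕ → Bool)) hxy
    have h2 := congrArg Prod.snd hxy
    apply Subtype.ext
    rw [ext_repr x.2 (Classical.choose_spec x.2.2),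
        ext_repr y.2 (Classical.choose_spec y.2.2)]
    simp only at h2
    exact congrArg₂ md h2 h1
  obtain ⟨Φ, hΦ⟩ := hinj
  calc Cardinal.mk ↥(ext S) ≤ Cardinal.mk (↥S × List ℕ) := Cardinal.mk_le_of_injective hΦ
    _ = Cardinal.mk ↥S * Cardinal.mk (List ℕ) := by
        rw [Cardinal.mk_prod, Cardinal.lift_id, Cardinal.lift_id]
    _ ≤ Cardinal.aleph 1 * Cardinal.aleph 1 := by
        apply mul_le_mul'
        · rw [hSmk]
        · exact le_trans (Cardinal.mk_le_aleph0) (Cardinal.aleph0_le_aleph 1)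
    _ = Cardinal.aleph 1 := Cardinal.mul_eq_self (Cardinal.aleph0_le_aleph 1)

lemma ext_dense {S : Set (ℕ → Bool)} (hS : Aleph1Dense S) : Aleph1Dense (ext S) := by
  intro U hU hUne
  obtain ⟨u, hu⟩ := hUne
  obtain ⟨n, hcyl⟩ := exists_cyl hU hu
  apply le_antisymm
  · exact le_trans (Cardinal.mk_le_mk_of_subset (Set.inter_subset_left)) (mk_ext_le hS)
  · -- lower bound: inject S ∩ V into ext S ∩ U
    set V : Set (ℕ → Bool) := {y | ∀ i < n, y i = g u i} with hV
    have hVopen : IsOpen V := cyl_open n (g u)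
    have hVne : V.Nonempty := ⟨g u, fun _ _ => rfl⟩
    have hmk : Cardinal.mk ↥(S ∩ V) = Cardinal.aleph 1 := hS V hVopen hVne
    -- the injection
    set F : (ℕ → Bool) → (ℕ → ℕ) := fun b i => if i < n then u i else (b i).toNat with hF
    have hgF : ∀ b ∈ S ∩ V, g (F b) = b := by
      intro b hb
      funext i
      by_cases hi : i < n
      · have : g (F b) i = g u i := by simp [g, F, hi]
        rw [this, ← hb.2 i hi]
      · have : F b i = (b i).toNat := by simp [F, hi]
        simp only [g, this]
        cases b i <;> simp
    have hmem : ∀ b ∈ S ∩ V, F b ∈ ext S ∩ U := by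
      intro b hb
      refine ⟨⟨by rw [hgF b hb]; exact hb.1, n, fun i hi => ?_⟩, ?_⟩
      · have : F b i = (b i).toNat := by simp [F, Nat.not_lt_of_le hi]
        rw [this]; cases b i <;> simp
      · exact hcyl _ (fun i hi => by simp [F, hi])
    have hinj : Function.Injective
        (fun b : ↥(S ∩ V) => (⟨F b.1, hmem b.1 b.2⟩ : ↥(ext S ∩ U))) := by
      intro b b' hbb'
      have : F b.1 = F b'.1 := congrArg Subtype.val hbb'
      apply Subtype.ext
      rw [← hgF b.1 b.2, ← hgF b'.1 b'.2, this]
    calc Cardinal.aleph 1 = Cardinal.mk ↥(S ∩ V) := hmk.symm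
      _ ≤ Cardinal.mk ↥(ext S ∩ U) := Cardinal.mk_le_of_injective hinj

end Stmt10Aux

open Stmt10Aux in
/-- The strong Lipschitz Baumgartner axiom for `ω^ω` implies the strong Lipschitz
Baumgartner axiom for `2^ω`. -/
theorem stmt_10
    (hBA : ∀ A B : Set (ℕ → ℕ), Aleph1Dense A → Aleph1Dense B →
      ∃ f : (ℕ → ℕ) → (ℕ → ℕ), IsLip f ∧ Set.InjOn f A ∧ f '' A = B) :
    ∀ A B : Set (ℕ → Bool), Aleph1Dense A → Aleph1Dense B →
      ∃ f : ℕ → (ℕ → Bool) → (ℕ → Bool), (∀ n, IsLip (f n)) ∧ B = ⋃ n, f n '' A := by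
  intro A B hA hB
  obtain ⟨f, hf, _hinj, him⟩ := hBA (ext A) (ext B) (ext_dense hA) (ext_dense hB)
  classical
  let e : List ℕ ≃ ℕ := Denumerable.eqv (List ℕ)
  refine ⟨fun n y => g (f (md (e.symm n) y)), ?_, ?_⟩
  · intro n x y m hagree i him'
    have hmd : ∀ j < m, md (e.symm n) x j = md (e.symm n) y j := by
      intro j hj; simp [md, hagree j hj]
    have := hf _ _ m hmd i him'
    simp [g, this]
  · ext b
    constructor
    · intro hb
      have hbB : (fun n => (b n).toNat) ∈ ext B := by
        refine ⟨by rw [g_ofBool]; exact hb, 0, fun i _ => ?_⟩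
        cases h : b i <;> simp [h]
      rw [← him] at hbB
      obtain ⟨x, hx, hfx⟩ := hbB
      obtain ⟨k, hk⟩ := hx.2
      refine Set.mem_iUnion.mpr ⟨e (List.ofFn (fun i : Fin k => x i / 2)),
        ⟨g x, hx.1, ?_⟩⟩
      simp only [Equiv.symm_apply_apply]
      rw [← ext_repr hx hk, hfx, g_ofBool]
    · intro hb
      obtain ⟨n, y, hy, hfy⟩ := Set.mem_iUnion.mp hb
      have h1 : md (e.symm n) y ∈ ext A := md_mem_ext hy _
      have h2 : f (md (e.symm n) y) ∈ ext B := him ▸ Set.mem_image_of_mem f h1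
      rw [← hfy]
      exact h2.1
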